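/- Let X₁, …, Xₙ be finite-valued random variables on a common probability space, let [n] = S₁ ∪ ⋯ ∪ S_m be a partition into non-empty subsets, and for each j let Y_j := X_{S_j} be the clumped random variable, enumerating S_j = {k_{j,1} < ⋯ < k_{j,s_j}}. Then DTC(X₁;…;Xₙ) = DTC(Y₁;…;Y_m) + ∑_{j=1}^m DTC(X_{k_{j,1}};…;X_{k_{j,s_j}} | X_{[n]∖S_j}), with the convention that DTC of a single random variable is 0. -/
import Mathlib


open MeasureTheory Real

namespace Corr

variable {Ω : Type*} [MeasurableSpace Ω]

/-- Shannon entropy of a finite-valued random variable. -/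
noncomputable def shEnt {K : Type*} [Fintype K] (μ : Measure Ω) (X : Ω → K) : ℝ :=
  ∑ k : K, Real.negMulLog ((μ (X ⁻¹' {k})).toReal)

/-- Conditional Shannon entropy `H(X | Y)`. -/
noncomputable def condEnt {K L : Type*} [Fintype K] [Fintype L]
    (μ : Measure Ω) (X : Ω → K) (Y : Ω → L) : ℝ :=
  shEnt μ (fun ω => (X ω, Y ω)) - shEnt μ Y

/-- Mutual information `I(X ; Y)`. -/
noncomputable def mutInfo {K L : Type*} [Fintype K] [Fintype L]
    (μ : Measure Ω) (X : Ω → K) (Y : Ω → L) : ℝ :=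
  shEnt μ X + shEnt μ Y - shEnt μ (fun ω => (X ω, Y ω))

/-- Conditional mutual information `I(X ; Y | Z)`. -/
noncomputable def condMutInfo {K L M : Type*} [Fintype K] [Fintype L] [Fintype M]
    (μ : Measure Ω) (X : Ω → K) (Y : Ω → L) (Z : Ω → M) : ℝ :=
  condEnt μ X Z + condEnt μ Y Z - condEnt μ (fun ω => (X ω, Y ω)) Z

/-- The joint random variable of a family of random variables. -/
def joint {ι : Type*} {K : ι → Type*} (X : ∀ i, Ω → K i) : Ω → ∀ i, K i :=
  fun ω i => X i ω

/-- Total correlation `TC(X₁;…;Xₙ)`. -/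
noncomputable def TC {ι : Type*} [Fintype ι] [DecidableEq ι] {K : ι → Type*}
    [∀ i, Fintype (K i)] (μ : Measure Ω) (X : ∀ i, Ω → K i) : ℝ :=
  (∑ i, shEnt μ (X i)) - shEnt μ (joint X)

/-- Dual total correlation `DTC(X₁;…;Xₙ)`. -/
noncomputable def DTC {ι : Type*} [Fintype ι] [DecidableEq ι] {K : ι → Type*}
    [∀ i, Fintype (K i)] (μ : Measure Ω) (X : ∀ i, Ω → K i) : ℝ :=
  shEnt μ (joint X) - ∑ i, condEnt μ (X i) (joint fun j : {j : ι // j ≠ i} => X j.1)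

/-- Conditional total correlation `TC(X₁;…;Xₙ | Y)`. -/
noncomputable def condTC {ι : Type*} [Fintype ι] [DecidableEq ι] {K : ι → Type*}
    [∀ i, Fintype (K i)] {L : Type*} [Fintype L]
    (μ : Measure Ω) (X : ∀ i, Ω → K i) (Y : Ω → L) : ℝ :=
  (∑ i, condEnt μ (X i) Y) - condEnt μ (joint X) Y

/-- Conditional dual total correlation `DTC(X₁;…;Xₙ | Y)`. -/
noncomputable def condDTC {ι : Type*} [Fintype ι] [DecidableEq ι] {K : ι → Type*}
    [∀ i, Fintype (K i)] {L : Type*} [Fintype L]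
    (μ : Measure Ω) (X : ∀ i, Ω → K i) (Y : Ω → L) : ℝ :=
  condEnt μ (joint X) Y -
    ∑ i, condEnt μ (X i)
      (fun ω => (joint (fun j : {j : ι // j ≠ i} => X j.1) ω, Y ω))

lemma shEnt_eq {A B : Type*} [Fintype A] [Fintype B] (μ : Measure Ω) {Z : Ω → A} {W : Ω → B}
    (e : A → B) (he : Function.Injective e) (hw : ∀ ω, W ω = e (Z ω)) :
    shEnt μ W = shEnt μ Z := by
  classical
  have hW : W = fun ω => e (Z ω) := funext hw
  subst hW
  unfold shEnt
  have h1 : ∑ a : A, Real.negMulLog ((μ (Z ⁻¹' {a})).toReal)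
      = ∑ b ∈ Finset.univ.image e,
          Real.negMulLog ((μ ((fun ω => e (Z ω)) ⁻¹' {b})).toReal) := by
    rw [Finset.sum_image (fun a _ b _ h => he h)]
    apply Finset.sum_congr rfl
    intro a _
    have : (fun ω => e (Z ω)) ⁻¹' {e a} = Z ⁻¹' {a} := by
      ext ω; simp [he.eq_iff]
    rw [this]
  rw [h1]
  symm
  apply Finset.sum_subset (Finset.subset_univ _)
  intro b _ hb
  have : (fun ω => e (Z ω)) ⁻¹' {b} = ∅ := by
    ext ω
    simp only [Set.mem_preimage, Set.mem_singleton_iff, Set.mem_empty_iff_false, iff_false]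
    intro h
    exact hb (Finset.mem_image.mpr ⟨Z ω, Finset.mem_univ _, h⟩)
  simp [this]

/-- **DTC clumping rule.** For a partition `[n] = S₁ ∪ ⋯ ∪ S_m` into non-empty
subsets and clumped variables `Y_j := X_{S_j}`,
`DTC(X₁;…;Xₙ) = DTC(Y₁;…;Y_m) + ∑_j DTC((Xᵢ)_{i ∈ S_j} | X_{[n]∖S_j})`. -/
theorem dtc_clumping (μ : Measure Ω) [IsProbabilityMeasure μ]
    {n m : ℕ} {K : Fin n → Type*} [∀ i, Fintype (K i)]
    [∀ i, MeasurableSpace (K i)] [∀ i, MeasurableSingletonClass (K i)]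
    (X : ∀ i, Ω → K i) (hX : ∀ i, Measurable (X i))
    (S : Fin m → Finset (Fin n)) (hne : ∀ j, (S j).Nonempty)
    (hdisj : ∀ j j', j ≠ j' → Disjoint (S j) (S j'))
    (hcover : ∀ i : Fin n, ∃ j, i ∈ S j) :
    DTC μ X = DTC μ (fun j : Fin m => joint fun i : {x : Fin n // x ∈ S j} => X i.1)
      + ∑ j : Fin m, condDTC μ (fun i : {x : Fin n // x ∈ S j} => X i.1)
          (joint fun i : {x : Fin n // x ∈ (S j)ᶜ} => X i.1) := by
  classical
  simp only [DTC, condDTC, condEnt]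
  set h : Finset (Fin n) → ℝ :=
    fun T => shEnt μ (joint fun i : {x : Fin n // x ∈ T} => X i.1) with hdef
  -- claim 1
  have c1 : shEnt μ (joint X) = h Finset.univ := by
    apply shEnt_eq μ (fun z (i : Fin n) => z ⟨i, Finset.mem_univ i⟩)
    · intro z z' hz; funext k; exact congrFun hz k.1
    · intro ω; rfl
  -- claim 2
  have c2 : ∀ i : Fin n,
      shEnt μ (fun ω => (X i ω, joint (fun j : {j : Fin n // j ≠ i} => X j.1) ω))
        = h Finset.univ := by
    intro i
    apply shEnt_eq μ (fun z => (z ⟨i, Finset.mem_univ i⟩,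
      fun j : {j : Fin n // j ≠ i} => z ⟨j.1, Finset.mem_univ j.1⟩))
    · intro z z' hz
      funext k
      by_cases hk : k.1 = i
      · have hk2 : k = ⟨i, Finset.mem_univ i⟩ := Subtype.ext hk
        rw [hk2]; exact congrArg Prod.fst hz
      · exact congrFun (congrArg Prod.snd hz) ⟨k.1, hk⟩
    · intro ω; rfl
  -- claim 3
  have c3 : ∀ i : Fin n,
      shEnt μ (joint fun j : {j : Fin n // j ≠ i} => X j.1) = h ({i}ᶜ) := by
    intro i
    apply shEnt_eq μ (fun z (j : {j : Fin n // j ≠ i}) =>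
      z ⟨j.1, Finset.mem_compl.mpr (Finset.notMem_singleton.mpr j.2)⟩)
    · intro z z' hz
      funext k
      exact congrFun hz ⟨k.1, Finset.notMem_singleton.mp (Finset.mem_compl.mp k.2)⟩
    · intro ω; rfl
  -- claim 4
  have c4 : shEnt μ (joint fun j : Fin m => joint fun i : {x : Fin n // x ∈ S j} => X i.1)
      = h Finset.univ := by
    apply shEnt_eq μ (fun z (j : Fin m) (i : {x : Fin n // x ∈ S j}) =>
      z ⟨i.1, Finset.mem_univ i.1⟩)
    · intro z z' hz
      funext k
      obtain ⟨j, hj⟩ := hcover k.1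
      exact congrFun (congrFun hz j) ⟨k.1, hj⟩
    · intro ω; rfl
  -- claim 5
  have c5 : ∀ j : Fin m,
      shEnt μ (fun ω => ((joint fun i : {x : Fin n // x ∈ S j} => X i.1) ω,
        joint (fun j' : {j' : Fin m // j' ≠ j} =>
          joint fun i : {x : Fin n // x ∈ S j'.1} => X i.1) ω)) = h Finset.univ := by
    intro j
    apply shEnt_eq μ (fun z =>
      ((fun i : {x : Fin n // x ∈ S j} => z ⟨i.1, Finset.mem_univ i.1⟩),
       (fun (j' : {j' : Fin m // j' ≠ j}) (i : {x : Fin n // x ∈ S j'.1}) =>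
          z ⟨i.1, Finset.mem_univ i.1⟩)))
    · intro z z' hz
      funext k
      obtain ⟨j', hj'⟩ := hcover k.1
      by_cases hjj : j' = j
      · subst hjj
        exact congrFun (congrArg Prod.fst hz) ⟨k.1, hj'⟩
      · exact congrFun (congrFun (congrArg Prod.snd hz) ⟨j', hjj⟩) ⟨k.1, hj'⟩
    · intro ω; rfl
  -- claim 6
  have c6 : ∀ j : Fin m,
      shEnt μ (joint fun j' : {j' : Fin m // j' ≠ j} =>
        joint fun i : {x : Fin n // x ∈ S j'.1} => X i.1) = h ((S j)ᶜ) := by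
    intro j
    apply shEnt_eq μ (fun z (j' : {j' : Fin m // j' ≠ j}) (i : {x : Fin n // x ∈ S j'.1}) =>
      z ⟨i.1, Finset.mem_compl.mpr (Finset.disjoint_left.mp (hdisj j'.1 j j'.2) i.2)⟩)
    · intro z z' hz
      funext k
      obtain ⟨j', hj'⟩ := hcover k.1
      have hne' : j' ≠ j := by
        intro hEq; subst hEq; exact (Finset.mem_compl.mp k.2) hj'
      exact congrFun (congrFun hz ⟨j', hne'⟩) ⟨k.1, hj'⟩
    · intro ω; rfl
  -- claim 7
  have c7 : ∀ j : Fin m,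
      shEnt μ (fun ω => ((joint fun i : {x : Fin n // x ∈ S j} => X i.1) ω,
        (joint fun i : {x : Fin n // x ∈ (S j)ᶜ} => X i.1) ω)) = h Finset.univ := by
    intro j
    apply shEnt_eq μ (fun z =>
      ((fun i : {x : Fin n // x ∈ S j} => z ⟨i.1, Finset.mem_univ i.1⟩),
       (fun i : {x : Fin n // x ∈ (S j)ᶜ} => z ⟨i.1, Finset.mem_univ i.1⟩)))
    · intro z z' hz
      funext k
      by_cases hk : k.1 ∈ S j
      · exact congrFun (congrArg Prod.fst hz) ⟨k.1, hk⟩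
      · exact congrFun (congrArg Prod.snd hz) ⟨k.1, Finset.mem_compl.mpr hk⟩
    · intro ω; rfl
  -- claim 9
  have c9 : ∀ (j : Fin m) (i : {x : Fin n // x ∈ S j}),
      shEnt μ (fun ω => (X i.1 ω,
        (joint (fun j' : {j' : {x : Fin n // x ∈ S j} // j' ≠ i} => X j'.1.1) ω,
         joint (fun k : {x : Fin n // x ∈ (S j)ᶜ} => X k.1) ω))) = h Finset.univ := by
    intro j i
    apply shEnt_eq μ (fun z =>
      (z ⟨i.1, Finset.mem_univ i.1⟩,
       ((fun j' : {j' : {x : Fin n // x ∈ S j} // j' ≠ i} => z ⟨j'.1.1, Finset.mem_univ _⟩),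
        (fun k : {x : Fin n // x ∈ (S j)ᶜ} => z ⟨k.1, Finset.mem_univ _⟩))))
    · intro z z' hz
      funext k
      by_cases hk : k.1 = i.1
      · have hk2 : k = ⟨i.1, Finset.mem_univ i.1⟩ := Subtype.ext hk
        rw [hk2]; exact congrArg Prod.fst hz
      · by_cases hk3 : k.1 ∈ S j
        · have hne2 : (⟨k.1, hk3⟩ : {x : Fin n // x ∈ S j}) ≠ i := by
            intro hEq; exact hk (congrArg Subtype.val hEq)
          exact congrFun (congrArg Prod.fst (congrArg Prod.snd hz)) ⟨⟨k.1, hk3⟩, hne2⟩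
        · exact congrFun (congrArg Prod.snd (congrArg Prod.snd hz))
            ⟨k.1, Finset.mem_compl.mpr hk3⟩
    · intro ω; rfl
  -- claim 10
  have c10 : ∀ (j : Fin m) (i : {x : Fin n // x ∈ S j}),
      shEnt μ (fun ω =>
        (joint (fun j' : {j' : {x : Fin n // x ∈ S j} // j' ≠ i} => X j'.1.1) ω,
         joint (fun k : {x : Fin n // x ∈ (S j)ᶜ} => X k.1) ω)) = h ({i.1}ᶜ) := by
    intro j i
    apply shEnt_eq μ (fun z =>
      ((fun j' : {j' : {x : Fin n // x ∈ S j} // j' ≠ i} =>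
          z ⟨j'.1.1, Finset.mem_compl.mpr (Finset.notMem_singleton.mpr
            (fun hEq => j'.2 (Subtype.ext hEq)))⟩),
       (fun k : {x : Fin n // x ∈ (S j)ᶜ} =>
          z ⟨k.1, Finset.mem_compl.mpr (Finset.notMem_singleton.mpr
            (fun hEq => (Finset.mem_compl.mp k.2) (hEq ▸ i.2)))⟩)))
    · intro z z' hz
      funext k
      have hki : k.1 ≠ i.1 := Finset.notMem_singleton.mp (Finset.mem_compl.mp k.2)
      by_cases hk3 : k.1 ∈ S j
      · have hne2 : (⟨k.1, hk3⟩ : {x : Fin n // x ∈ S j}) ≠ i := by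
          intro hEq; exact hki (congrArg Subtype.val hEq)
        exact congrFun (congrArg Prod.fst hz) ⟨⟨k.1, hk3⟩, hne2⟩
      · exact congrFun (congrArg Prod.snd hz) ⟨k.1, Finset.mem_compl.mpr hk3⟩
    · intro ω; rfl
  have c8 : ∀ j : Fin m,
      shEnt μ (joint fun i : {x : Fin n // x ∈ (S j)ᶜ} => X i.1) = h ((S j)ᶜ) :=
    fun j => rfl
  clear_value h
  clear hdef
  rw [c1, c4]
  simp only [c2, c3, c5, c6, c7, c8, c9, c10]
  have key : ∑ x : Fin n, (h Finset.univ - h {x}ᶜ)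
      = ∑ j : Fin m, ∑ i : {x : Fin n // x ∈ S j}, (h Finset.univ - h {i.1}ᶜ) := by
    have e1 : ∀ j : Fin m, ∑ i : {x : Fin n // x ∈ S j}, (h Finset.univ - h {i.1}ᶜ)
        = ∑ i ∈ S j, (h Finset.univ - h {i}ᶜ) := fun j => Finset.sum_coe_sort (S j) (fun i => h Finset.univ - h ({i}ᶜ))
    simp only [e1]
    have e2 : (Finset.univ : Finset (Fin n)) = Finset.univ.biUnion S := by
      ext i; simpa using hcover i
    calc ∑ x : Fin n, (h Finset.univ - h {x}ᶜ)
        = ∑ x ∈ Finset.univ.biUnion S, (h Finset.univ - h {x}ᶜ) := by rw [← e2]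
      _ = ∑ j : Fin m, ∑ i ∈ S j, (h Finset.univ - h {i}ᶜ) := by
          apply Finset.sum_biUnion
          intro j _ j' _ hjj'
          exact hdisj j j' hjj'
  rw [key]
  simp only [Finset.sum_sub_distrib]
  ring

end Corr
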